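/- arXiv:2012.01698 — 4 statements merged into one kernel-verified Lean document; each statement's English description precedes it below -/
import Mathlib

section
/- Let 1 ≤ p ≤ ∞, let f, f̃ : ℝ^d → ℝ^d and h, h̃ : ℝ^d → ℝ^q be functions, and suppose f is Lipschitz with constant L_f > 0 and h is Lipschitz with constant L_h > 0, both with respect to the p-norm. Assume that ‖f(x) − f̃(x)‖_p ≤ e₁ and ‖h(x) − h̃(x)‖_p ≤ e₃ for all x ∈ ℝ^d, for some e₁, e₃ > 0. Then for every integer K ≥ 1 and every x ∈ ℝ^d, ‖h(f^K(x)) − h̃(f̃^K(x))‖_p ≤ L_h (∑_{j=0}^{K−1} L_f^j) e₁ + e₃, where f^K denotes the K-fold composition f ∘ f ∘ ⋯ ∘ f. -/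
open scoped ENNReal

theorem statement4 (d q : ℕ) (p : ℝ≥0∞) [Fact (1 ≤ p)]
    (f f' : PiLp p (fun _ : Fin d => ℝ) → PiLp p (fun _ : Fin d => ℝ))
    (h h' : PiLp p (fun _ : Fin d => ℝ) → PiLp p (fun _ : Fin q => ℝ))
    (Lf Lh e₁ e₃ : ℝ) (hLf : 0 < Lf) (hLh : 0 < Lh) (he₁ : 0 < e₁) (he₃ : 0 < e₃)
    (hfLip : ∀ x y, ‖f x - f y‖ ≤ Lf * ‖x - y‖)
    (hhLip : ∀ x y, ‖h x - h y‖ ≤ Lh * ‖x - y‖)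
    (hfe : ∀ x, ‖f x - f' x‖ ≤ e₁)
    (hhe : ∀ x, ‖h x - h' x‖ ≤ e₃)
    (K : ℕ) (hK : 1 ≤ K) (x : PiLp p (fun _ : Fin d => ℝ)) :
    ‖h (f^[K] x) - h' (f'^[K] x)‖ ≤ Lh * (∑ j ∈ Finset.range K, Lf ^ j) * e₁ + e₃ := by
  have key : ∀ n, ‖f^[n] x - f'^[n] x‖ ≤ (∑ j ∈ Finset.range n, Lf ^ j) * e₁ := by
    intro n
    induction n with
    | zero => simp
    | succ n ih =>
      rw [Function.iterate_succ_apply', Function.iterate_succ_apply']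
      calc ‖f (f^[n] x) - f' (f'^[n] x)‖
          ≤ ‖f (f^[n] x) - f (f'^[n] x)‖ + ‖f (f'^[n] x) - f' (f'^[n] x)‖ := by
            simpa using norm_sub_le_norm_sub_add_norm_sub _ (f (f'^[n] x)) _
        _ ≤ Lf * ((∑ j ∈ Finset.range n, Lf ^ j) * e₁) + e₁ :=
            add_le_add ((hfLip _ _).trans (mul_le_mul_of_nonneg_left ih hLf.le)) (hfe _)
        _ = (∑ j ∈ Finset.range (n + 1), Lf ^ j) * e₁ := by
            rw [Finset.sum_range_succ', pow_zero, add_mul, one_mul]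
            congr 1
            rw [← mul_assoc, Finset.mul_sum]
            simp [Finset.sum_mul, pow_succ, mul_comm]
  calc ‖h (f^[K] x) - h' (f'^[K] x)‖
      ≤ ‖h (f^[K] x) - h (f'^[K] x)‖ + ‖h (f'^[K] x) - h' (f'^[K] x)‖ := by
        simpa using norm_sub_le_norm_sub_add_norm_sub _ (h (f'^[K] x)) _
    _ ≤ Lh * ((∑ j ∈ Finset.range K, Lf ^ j) * e₁) + e₃ := by
        exact add_le_add ((hhLip _ _).trans (mul_le_mul_of_nonneg_left (key K) hLh.le)) (hhe _)
    _ = Lh * (∑ j ∈ Finset.range K, Lf ^ j) * e₁ + e₃ := by ring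
end

section
/- Let 1 ≤ p ≤ ∞, let f, f̃ : ℝ^d → ℝ^d satisfy ‖f(x) − f̃(x)‖_p ≤ δ for all x ∈ ℝ^d, for some δ > 0. Let T > 0, let K ≥ 1 be an integer, and set h = T/K. Let α ∈ ℝ be such that 1 + hα ≥ 0 and the Euler map E(x) = x + h f(x) is Lipschitz with constant 1 + hα with respect to the p-norm. Define Ẽ(x) = x + h f̃(x). Then for every x ∈ ℝ^d, ‖E^K(x) − Ẽ^K(x)‖_p ≤ max{e^{αT}, 1} · T · δ, where E^K and Ẽ^K denote K-fold self-compositions. -/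
open scoped ENNReal

theorem statement9 (d : ℕ) (p : ℝ≥0∞) [Fact (1 ≤ p)]
    (f f' : PiLp p (fun _ : Fin d => ℝ) → PiLp p (fun _ : Fin d => ℝ))
    (δ : ℝ) (hδ : 0 < δ) (hfe : ∀ x, ‖f x - f' x‖ ≤ δ)
    (T : ℝ) (hT : 0 < T) (K : ℕ) (hK : 1 ≤ K) (h : ℝ) (hh : h = T / K)
    (α : ℝ) (hα : 0 ≤ 1 + h * α)
    (hLip : ∀ x y, ‖(x + h • f x) - (y + h • f y)‖ ≤ (1 + h * α) * ‖x - y‖)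
    (x : PiLp p (fun _ : Fin d => ℝ)) :
    ‖(fun z => z + h • f z)^[K] x - (fun z => z + h • f' z)^[K] x‖ ≤
      max (Real.exp (α * T)) 1 * T * δ := by
  have hK0 : (0:ℝ) < K := by exact_mod_cast hK
  have hh0 : 0 < h := by rw [hh]; positivity
  have hKh : (K:ℝ) * h = T := by
    rw [hh]; field_simp
  set L := 1 + h * α with hL
  set E := fun z => z + h • f z with hE
  set E' := fun z => z + h • f' z with hE'
  have hstep : ∀ y, ‖E y - E' y‖ ≤ h * δ := by
    intro y
    have : E y - E' y = h • (f y - f' y) := by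
      simp only [hE, hE', smul_sub]; abel
    rw [this, norm_smul, Real.norm_eq_abs, abs_of_pos hh0]
    exact mul_le_mul_of_nonneg_left (hfe y) hh0.le
  have key : ∀ k, ‖E^[k] x - E'^[k] x‖ ≤ (∑ i ∈ Finset.range k, L ^ i) * (h * δ) := by
    intro k
    induction k with
    | zero => simp
    | succ k ih =>
      rw [Function.iterate_succ_apply', Function.iterate_succ_apply']
      calc ‖E (E^[k] x) - E' (E'^[k] x)‖
          ≤ ‖E (E^[k] x) - E (E'^[k] x)‖ + ‖E (E'^[k] x) - E' (E'^[k] x)‖ := by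
            simpa using norm_sub_le_norm_sub_add_norm_sub (E (E^[k] x)) (E (E'^[k] x)) (E' (E'^[k] x))
        _ ≤ L * ‖E^[k] x - E'^[k] x‖ + h * δ := by
            gcongr
            · exact hLip _ _
            · exact hstep _
        _ ≤ L * ((∑ i ∈ Finset.range k, L ^ i) * (h * δ)) + h * δ := by
            gcongr
        _ = (∑ i ∈ Finset.range (k+1), L ^ i) * (h * δ) := by
            rw [geom_sum_succ]; ring
  set M := max (Real.exp (α * T)) 1 with hM
  have hMpow : ∀ i ∈ Finset.range K, L ^ i ≤ M := by
    intro i hi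
    rcases le_total L 1 with hL1 | hL1
    · exact le_trans (pow_le_one₀ hα hL1) (le_max_right _ _)
    · have h1 : L ^ i ≤ L ^ K :=
        pow_le_pow_right₀ hL1 (Finset.mem_range.mp hi).le
      have h2 : L ^ K ≤ Real.exp (h * α) ^ K :=
        pow_le_pow_left₀ hα (Real.add_one_le_exp (h*α) |>.trans_eq' (by ring)) K
      have h3 : Real.exp (h * α) ^ K = Real.exp (α * T) := by
        rw [← Real.exp_nat_mul, ← hKh]; ring_nf
      exact le_trans (h1.trans (h2.trans_eq h3)) (le_max_left _ _)
  have hsum : (∑ i ∈ Finset.range K, L ^ i) ≤ (K : ℝ) * M := by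
    calc (∑ i ∈ Finset.range K, L ^ i) ≤ ∑ _i ∈ Finset.range K, M :=
          Finset.sum_le_sum hMpow
      _ = (K : ℝ) * M := by simp [mul_comm]
  calc ‖E^[K] x - E'^[K] x‖ ≤ (∑ i ∈ Finset.range K, L ^ i) * (h * δ) := key K
    _ ≤ ((K : ℝ) * M) * (h * δ) := by
        have : 0 < h * δ := mul_pos hh0 hδ
        gcongr
    _ = M * T * δ := by rw [← hKh]; ring
end

section
/- Let 1 ≤ p ≤ ∞ and let f : ℝ^d → ℝ^d be a C¹ function such that ‖f(x)‖_p ≤ A and the operator p-norm of the Jacobian satisfies ‖Df(x)‖_p ≤ B for all x ∈ ℝ^d, for some constants A, B > 0. Let T > 0, let K ≥ 1 be an integer, and set h = T/K. Let f̃ : ℝ^d → ℝ^d satisfy ‖f(x) − f̃(x)‖_p ≤ δ for all x ∈ ℝ^d, for some δ > 0, and define the perturbed Euler map Ẽ(x) = x + h f̃(x). Let α ∈ ℝ be such that 1 + hα ≥ 0 and the Euler map E(x) = x + h f(x) is Lipschitz with constant 1 + hα with respect to the p-norm. For x₀ ∈ ℝ^d let φ : [0, T] → ℝ^d be the solution of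 the ODE φ'(t) = f(φ(t)) with φ(0) = x₀. Then ‖φ(T) − Ẽ^K(x₀)‖_p ≤ max{e^{αT}, 1} · T · δ + A e^{BT} · T / K. -/
open scoped ENNReal

set_option maxHeartbeats 1000000 in

theorem statement10 (d : ℕ) (p : ℝ≥0∞) [Fact (1 ≤ p)]
    (f : PiLp p (fun _ : Fin d => ℝ) → PiLp p (fun _ : Fin d => ℝ))
    (hf : ContDiff ℝ 1 f)
    (A B : ℝ) (hA : 0 < A) (hB : 0 < B)
    (hfA : ∀ x, ‖f x‖ ≤ A) (hfB : ∀ x, ‖fderiv ℝ f x‖ ≤ B)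
    (T : ℝ) (hT : 0 < T) (K : ℕ) (hK : 1 ≤ K) (h : ℝ) (hh : h = T / K)
    (f' : PiLp p (fun _ : Fin d => ℝ) → PiLp p (fun _ : Fin d => ℝ))
    (δ : ℝ) (hδ : 0 < δ) (hfe : ∀ x, ‖f x - f' x‖ ≤ δ)
    (α : ℝ) (hα : 0 ≤ 1 + h * α)
    (hLip : ∀ x y, ‖(x + h • f x) - (y + h • f y)‖ ≤ (1 + h * α) * ‖x - y‖)
    (x₀ : PiLp p (fun _ : Fin d => ℝ)) (φ : ℝ → PiLp p (fun _ : Fin d => ℝ))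
    (hφ0 : φ 0 = x₀)
    (hφ : ∀ t ∈ Set.Icc (0 : ℝ) T, HasDerivAt φ (f (φ t)) t) :
    ‖φ T - (fun z => z + h • f' z)^[K] x₀‖ ≤
      max (Real.exp (α * T)) 1 * T * δ + A * Real.exp (B * T) * T / K := by
  have hKpos : (0:ℝ) < K := by exact_mod_cast Nat.lt_of_lt_of_le Nat.zero_lt_one hK
  have hhpos : 0 < h := by rw [hh]; positivity
  have hKh : (K:ℝ) * h = T := by
    rw [hh, mul_div_cancel₀ _ (ne_of_gt hKpos)]
  -- f is B-Lipschitz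
  have hfLip : ∀ x y, ‖f x - f y‖ ≤ B * ‖x - y‖ := by
    intro x y
    have := convex_univ.norm_image_sub_le_of_norm_fderiv_le
      (fun z _ => (hf.differentiable one_ne_zero).differentiableAt) (fun z _ => hfB z)
      (Set.mem_univ y) (Set.mem_univ x)
    simpa using this
  have hφc : ContinuousOn φ (Set.Icc 0 T) := fun t ht =>
    ((hφ t ht).continuousAt).continuousWithinAt
  -- fundamental theorem of calculus
  have hFTC : ∀ t₁ ∈ Set.Icc (0:ℝ) T, ∀ t₂ ∈ Set.Icc (0:ℝ) T, t₁ ≤ t₂ →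
      φ t₂ - φ t₁ = ∫ s in t₁..t₂, f (φ s) := by
    intro t₁ h₁ t₂ h₂ h₁₂
    have hsub : Set.uIcc t₁ t₂ ⊆ Set.Icc 0 T := by
      rw [Set.uIcc_of_le h₁₂]; exact Set.Icc_subset_Icc h₁.1 h₂.2
    refine (intervalIntegral.integral_eq_sub_of_hasDerivAt (fun t ht => hφ t (hsub ht)) ?_).symm
    exact (hf.continuous.comp_continuousOn (hφc.mono hsub)).intervalIntegrable
  have hint : ∀ t₁ ∈ Set.Icc (0:ℝ) T, ∀ t₂ ∈ Set.Icc (0:ℝ) T, t₁ ≤ t₂ →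
      IntervalIntegrable (fun s => f (φ s)) MeasureTheory.volume t₁ t₂ := by
    intro t₁ h₁ t₂ h₂ h₁₂
    have hsub : Set.uIcc t₁ t₂ ⊆ Set.Icc 0 T := by
      rw [Set.uIcc_of_le h₁₂]; exact Set.Icc_subset_Icc h₁.1 h₂.2
    exact (hf.continuous.comp_continuousOn (hφc.mono hsub)).intervalIntegrable
  -- speed bound on φ
  have hgrow : ∀ t₁ ∈ Set.Icc (0:ℝ) T, ∀ t₂ ∈ Set.Icc (0:ℝ) T, t₁ ≤ t₂ →
      ‖φ t₂ - φ t₁‖ ≤ A * (t₂ - t₁) := by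
    intro t₁ h₁ t₂ h₂ h₁₂
    rw [hFTC t₁ h₁ t₂ h₂ h₁₂]
    have := intervalIntegral.norm_integral_le_of_norm_le_const
      (C := A) (f := fun s => f (φ s)) (a := t₁) (b := t₂) (fun s _ => hfA (φ s))
    calc ‖∫ s in t₁..t₂, f (φ s)‖ ≤ A * |t₂ - t₁| := this
      _ = A * (t₂ - t₁) := by rw [abs_of_nonneg (by linarith)]
  -- local truncation error
  have htrunc : ∀ t₁ ∈ Set.Icc (0:ℝ) T, ∀ t₂ ∈ Set.Icc (0:ℝ) T, t₁ ≤ t₂ →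
      ‖φ t₂ - (φ t₁ + (t₂ - t₁) • f (φ t₁))‖ ≤ A * B * (t₂ - t₁)^2 := by
    intro t₁ h₁ t₂ h₂ h₁₂
    have key : φ t₂ - (φ t₁ + (t₂ - t₁) • f (φ t₁))
        = ∫ s in t₁..t₂, (f (φ s) - f (φ t₁)) := by
      rw [intervalIntegral.integral_sub (hint t₁ h₁ t₂ h₂ h₁₂) intervalIntegrable_const,
        intervalIntegral.integral_const, ← hFTC t₁ h₁ t₂ h₂ h₁₂]
      abel
    rw [key]
    have hb : ∀ s ∈ Set.uIoc t₁ t₂, ‖f (φ s) - f (φ t₁)‖ ≤ A * B * (t₂ - t₁) := by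
      intro s hs
      rw [Set.uIoc_of_le h₁₂] at hs
      have hs1 : s ∈ Set.Icc (0:ℝ) T := ⟨by linarith [h₁.1, hs.1], le_trans hs.2 h₂.2⟩
      calc ‖f (φ s) - f (φ t₁)‖ ≤ B * ‖φ s - φ t₁‖ := hfLip _ _
        _ ≤ B * (A * (s - t₁)) := by
            exact mul_le_mul_of_nonneg_left (hgrow t₁ h₁ s hs1 (le_of_lt hs.1)) (le_of_lt hB)
        _ ≤ A * B * (t₂ - t₁) := by
            have hs2 : s - t₁ ≤ t₂ - t₁ := by linarith [hs.2]
            nlinarith [mul_pos hA hB]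
    calc ‖∫ s in t₁..t₂, (f (φ s) - f (φ t₁))‖ ≤ A * B * (t₂ - t₁) * |t₂ - t₁| :=
        intervalIntegral.norm_integral_le_of_norm_le_const hb
      _ = A * B * (t₂ - t₁)^2 := by rw [abs_of_nonneg (by linarith)]; ring
  -- geometric sums
  set Sa : ℕ → ℝ := fun k => ∑ j ∈ Finset.range k, (1 + h*α)^j with hSa
  set Sb : ℕ → ℝ := fun k => ∑ j ∈ Finset.range k, (1 + h*B)^j with hSb
  have hBpos : (0:ℝ) ≤ 1 + h * B := by positivity
  have hSann : ∀ k, 0 ≤ Sa k := fun k => Finset.sum_nonneg (fun j _ => pow_nonneg hα j)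
  have hSbnn : ∀ k, 0 ≤ Sb k := fun k => Finset.sum_nonneg (fun j _ => pow_nonneg hBpos j)
  -- main induction
  have key : ∀ k, k ≤ K → ‖φ (k * h) - (fun z => z + h • f' z)^[k] x₀‖ ≤
      Sa k * (h * δ) + Sb k * (A * B * h^2) := by
    intro k
    induction k with
    | zero => intro _; simp [hφ0, hSa, hSb]
    | succ k ih =>
      intro hk1
      have hkK : k ≤ K := Nat.le_of_succ_le hk1
      have ih' := ih hkK
      set xk := (fun z => z + h • f' z)^[k] x₀ with hxk
      have hcast : ((k:ℝ)+1) ≤ (K:ℝ) := by exact_mod_cast hk1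
      have ht : (k:ℝ) * h ∈ Set.Icc (0:ℝ) T := by
        constructor
        · positivity
        · rw [← hKh]; nlinarith [hcast]
      have ht' : ((k+1:ℕ):ℝ) * h ∈ Set.Icc (0:ℝ) T := by
        constructor
        · positivity
        · rw [← hKh]; push_cast; nlinarith [hcast]
      have hle : (k:ℝ) * h ≤ ((k+1:ℕ):ℝ) * h := by push_cast; nlinarith
      have hdiff : ((k+1:ℕ):ℝ) * h - (k:ℝ) * h = h := by push_cast; ring
      -- truncation
      have h1 : ‖φ (((k+1:ℕ):ℝ) * h) - (φ ((k:ℝ)*h) + h • f (φ ((k:ℝ)*h)))‖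
          ≤ A * B * h^2 := by
        have := htrunc _ ht _ ht' hle
        rw [hdiff] at this
        exact this
      -- Lipschitz step, both constants
      have h2a : ‖(φ ((k:ℝ)*h) + h • f (φ ((k:ℝ)*h))) - (xk + h • f xk)‖
          ≤ (1 + h * α) * ‖φ ((k:ℝ)*h) - xk‖ := hLip _ _
      have h2b : ‖(φ ((k:ℝ)*h) + h • f (φ ((k:ℝ)*h))) - (xk + h • f xk)‖
          ≤ (1 + h * B) * ‖φ ((k:ℝ)*h) - xk‖ := by
        have e1 : (φ ((k:ℝ)*h) + h • f (φ ((k:ℝ)*h))) - (xk + h • f xk)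
            = (φ ((k:ℝ)*h) - xk) + h • (f (φ ((k:ℝ)*h)) - f xk) := by
          rw [smul_sub]; abel
        rw [e1]
        calc ‖(φ ((k:ℝ)*h) - xk) + h • (f (φ ((k:ℝ)*h)) - f xk)‖
            ≤ ‖φ ((k:ℝ)*h) - xk‖ + ‖h • (f (φ ((k:ℝ)*h)) - f xk)‖ := norm_add_le _ _
          _ ≤ ‖φ ((k:ℝ)*h) - xk‖ + h * (B * ‖φ ((k:ℝ)*h) - xk‖) := by
              rw [norm_smul, Real.norm_eq_abs, abs_of_pos hhpos]
              exact add_le_add_right (mul_le_mul_of_nonneg_left (hfLip _ _) (le_of_lt hhpos)) _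
          _ = (1 + h * B) * ‖φ ((k:ℝ)*h) - xk‖ := by ring
      -- perturbation step
      have h3 : ‖(xk + h • f xk) - (xk + h • f' xk)‖ ≤ h * δ := by
        have e1 : (xk + h • f xk) - (xk + h • f' xk) = h • (f xk - f' xk) := by
          rw [smul_sub]; abel
        rw [e1, norm_smul, Real.norm_eq_abs, abs_of_pos hhpos]
        exact mul_le_mul_of_nonneg_left (hfe _) (le_of_lt hhpos)
      -- combine Lipschitz with IH
      have hmid : ‖(φ ((k:ℝ)*h) + h • f (φ ((k:ℝ)*h))) - (xk + h • f xk)‖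
          ≤ (1 + h*α) * (Sa k * (h*δ)) + (1 + h*B) * (Sb k * (A*B*h^2)) := by
        have hp1 : 0 ≤ Sa k * (h * δ) := by positivity
        have hp2 : 0 ≤ Sb k * (A * B * h^2) := by positivity
        rcases le_total (1 + h*α) (1 + h*B) with hc | hc
        · calc _ ≤ (1 + h*α) * ‖φ ((k:ℝ)*h) - xk‖ := h2a
            _ ≤ (1 + h*α) * (Sa k * (h*δ) + Sb k * (A*B*h^2)) :=
                mul_le_mul_of_nonneg_left ih' hα
            _ ≤ (1 + h*α) * (Sa k * (h*δ)) + (1 + h*B) * (Sb k * (A*B*h^2)) := by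
                rw [mul_add]
                linarith [mul_le_mul_of_nonneg_right hc hp2]
        · calc _ ≤ (1 + h*B) * ‖φ ((k:ℝ)*h) - xk‖ := h2b
            _ ≤ (1 + h*B) * (Sa k * (h*δ) + Sb k * (A*B*h^2)) :=
                mul_le_mul_of_nonneg_left ih' hBpos
            _ ≤ (1 + h*α) * (Sa k * (h*δ)) + (1 + h*B) * (Sb k * (A*B*h^2)) := by
                rw [mul_add]
                linarith [mul_le_mul_of_nonneg_right hc hp1]
      have hiter : (fun z => z + h • f' z)^[k+1] x₀ = xk + h • f' xk := by
        rw [Function.iterate_succ_apply']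
      rw [hiter]
      have htri : ‖φ ((((k+1:ℕ)):ℝ) * h) - (xk + h • f' xk)‖
          ≤ ‖φ ((((k+1:ℕ)):ℝ) * h) - (φ ((k:ℝ)*h) + h • f (φ ((k:ℝ)*h)))‖
            + ‖(φ ((k:ℝ)*h) + h • f (φ ((k:ℝ)*h))) - (xk + h • f xk)‖
            + ‖(xk + h • f xk) - (xk + h • f' xk)‖ := by
        linarith [norm_sub_le_norm_sub_add_norm_sub
          (φ ((((k+1:ℕ)):ℝ) * h)) (φ ((k:ℝ)*h) + h • f (φ ((k:ℝ)*h))) (xk + h • f' xk),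
          norm_sub_le_norm_sub_add_norm_sub
          (φ ((k:ℝ)*h) + h • f (φ ((k:ℝ)*h))) (xk + h • f xk) (xk + h • f' xk)]
      have hSa1 : Sa (k+1) = (1 + h*α) * Sa k + 1 := by
        simp only [hSa]; rw [geom_sum_succ]
      have hSb1 : Sb (k+1) = (1 + h*B) * Sb k + 1 := by
        simp only [hSb]; rw [geom_sum_succ]
      rw [hSa1, hSb1]
      have ea : ((1 + h*α) * Sa k + 1) * (h*δ) = (1 + h*α) * (Sa k * (h*δ)) + h*δ := by ring
      have eb : ((1 + h*B) * Sb k + 1) * (A*B*h^2)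
          = (1 + h*B) * (Sb k * (A*B*h^2)) + A*B*h^2 := by ring
      rw [ea, eb]
      push_cast at htri h1 ⊢
      linarith [h1, h3, hmid, htri]
  have keyK := key K le_rfl
  rw [hKh] at keyK
  -- bound the two sums
  have hmax : 0 ≤ max (Real.exp (α * T)) 1 := le_trans zero_le_one (le_max_right _ _)
  have hSaK : Sa K ≤ K * max (Real.exp (α * T)) 1 := by
    have : ∀ j ∈ Finset.range K, (1 + h*α)^j ≤ max (Real.exp (α * T)) 1 := by
      intro j hj
      rcases le_total (1 + h*α) 1 with hc | hc
      · exact le_trans (pow_le_one₀ hα hc) (le_max_right _ _)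
      · refine le_trans ?_ (le_max_left _ _)
        have s1 : (1 + h*α)^j ≤ (1 + h*α)^K :=
          pow_le_pow_right₀ hc (Nat.le_of_lt (Finset.mem_range.mp hj))
        have s2 : (1 + h*α)^K ≤ (Real.exp (h*α))^K := by
          apply pow_le_pow_left₀ hα
          linarith [Real.add_one_le_exp (h*α)]
        have s3 : (Real.exp (h*α))^K = Real.exp (α * T) := by
          rw [← Real.exp_nat_mul]
          congr 1
          rw [← hKh]; ring
        rw [← s3]
        exact le_trans s1 s2
    calc Sa K ≤ ∑ _j ∈ Finset.range K, max (Real.exp (α * T)) 1 :=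
        Finset.sum_le_sum this
      _ = K * max (Real.exp (α * T)) 1 := by
        rw [Finset.sum_const, Finset.card_range, nsmul_eq_mul]
  have hSbK : Sb K * (A * B * h^2) ≤ A * Real.exp (B * T) * T / K := by
    have hne : (1 + h*B) ≠ 1 := by
      intro hcon
      have h0 : 0 < h * B := mul_pos hhpos hB
      have : h * B = 0 := by linarith
      linarith
    have hgeo : Sb K = ((1 + h*B)^K - 1) / (h*B) := by
      simp only [hSb]
      rw [geom_sum_eq hne]
      congr 1
      ring
    have hpow : (1 + h*B)^K ≤ Real.exp (B * T) := by
      have s2 : (1 + h*B)^K ≤ (Real.exp (h*B))^K := by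
        apply pow_le_pow_left₀ hBpos
        linarith [Real.add_one_le_exp (h*B)]
      have s3 : (Real.exp (h*B))^K = Real.exp (B * T) := by
        rw [← Real.exp_nat_mul]
        congr 1
        rw [← hKh]; ring
      rw [← s3]
      exact s2
    rw [hgeo]
    have h0 : (h*B) ≠ 0 := ne_of_gt (mul_pos hhpos hB)
    have e1 : ((1 + h*B)^K - 1) / (h*B) * (A * B * h^2) = A * h * ((1 + h*B)^K - 1) := by
      rw [div_mul_eq_mul_div, div_eq_iff h0]
      ring
    rw [e1]
    have e2 : A * Real.exp (B * T) * T / K = A * h * Real.exp (B * T) := by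
      rw [hh]; ring
    rw [e2]
    have hle1 : (1 + h*B)^K - 1 ≤ Real.exp (B * T) := by linarith only [hpow]
    have hAh : (0:ℝ) ≤ A * h := le_of_lt (mul_pos hA hhpos)
    exact mul_le_mul_of_nonneg_left hle1 hAh
  calc ‖φ T - (fun z => z + h • f' z)^[K] x₀‖
      ≤ Sa K * (h * δ) + Sb K * (A * B * h^2) := keyK
    _ ≤ (K * max (Real.exp (α * T)) 1) * (h * δ) + A * Real.exp (B * T) * T / K := by
        have : Sa K * (h * δ) ≤ (K * max (Real.exp (α * T)) 1) * (h * δ) := by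
          apply mul_le_mul_of_nonneg_right hSaK
          positivity
        linarith
    _ = max (Real.exp (α * T)) 1 * T * δ + A * Real.exp (B * T) * T / K := by
        rw [← hKh]; ring
end

section
/- Let D ⊂ ℝ^d, and let V : D × ℝ^q → ℝ be such that for every x ∈ D the function u ↦ V(x, u) is C² with all eigenvalues of its Hessian ∂²V/∂u²(x, u) lying in [λ_min, λ_max] with 0 < λ_min ≤ λ_max, and with ∂²V/∂u_j²(x, u) ≤ C₁ for all j = 1, …, q, all u ∈ ℝ^q, and some constant C₁ > 0. For each x ∈ D let u*(x) denote the unique minimizer of u ↦ V(x, u), and let u₀ ∈ ℝ^q and γ > 0 satisfy ‖u₀ − u*(x)‖_2 ≤ γ for all x ∈ D. Let Ṽ : D × ℝ^q → ℝ satisfy |V(x, u) − Ṽ(x, u)| ≤ e₁ for all (x, u) ∈ D × ℝ^q, for some e₁ > 0. Let h > 0, set β = 1 / max{1, 2λ_max} and L = 1 − β λ_min, and define ψ̃ : D × ℝ^q → ℝ^q componentwise by ψ̃(x, u)_j = u_j − (β/h)(Ṽ(x, u + h e_j) − Ṽ(x, u)), where e_j is the j-th standard basis vector of ℝ^q. Then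 for every x ∈ D and every integer K ≥ 1, ‖(ψ̃(x, ·))^K(u₀) − u*(x)‖_2 ≤ γ L^K + C₁ √q K h + 2 √q K h^{−1} e₁, where (ψ̃(x, ·))^K denotes the K-fold self-composition of the map u ↦ ψ̃(x, u). -/
open scoped RealInnerProductSpace

lemma sym_op_norm_le {E : Type*} [NormedAddCommGroup E] [InnerProductSpace ℝ E]
    (M : E →L[ℝ] E) (L : ℝ)
    (hsymm : ∀ v w : E, ⟪M v, w⟫ = ⟪M w, v⟫)
    (h0 : ∀ v : E, 0 ≤ ⟪M v, v⟫) (hL : ∀ v : E, ⟪M v, v⟫ ≤ L * ‖v‖ ^ 2)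
    (v : E) : ‖M v‖ ≤ L * ‖v‖ := by
  have CS : ∀ a b : E, ⟪M a, b⟫ ^ 2 ≤ ⟪M a, a⟫ * ⟪M b, b⟫ := by
    intro a b
    have key : ∀ t : ℝ, 0 ≤ ⟪M b, b⟫ * (t * t) + (2 * ⟪M a, b⟫) * t + ⟪M a, a⟫ := by
      intro t
      have h1 : ⟪M (a + t • b), a + t • b⟫ =
          ⟪M b, b⟫ * (t * t) + (2 * ⟪M a, b⟫) * t + ⟪M a, a⟫ := by
        have hMab : ⟪M b, a⟫ = ⟪M a, b⟫ := hsymm b a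
        have hMadd : M (a + t • b) = M a + t • M b := by simp
        rw [hMadd, inner_add_left, inner_add_right, inner_add_right,
          real_inner_smul_left, real_inner_smul_right, real_inner_smul_right, hMab, real_inner_smul_left]
        ring
      rw [← h1]; exact h0 _
    have := discrim_le_zero key
    rw [discrim] at this
    nlinarith [this]
  rcases eq_or_ne v 0 with rfl | hv
  · simp
  · have hvpos : 0 < ‖v‖ := norm_pos_iff.mpr hv
    have hv2 : 0 < ‖v‖ ^ 2 := by positivity
    have hLnn : 0 ≤ L := by nlinarith [h0 v, hL v]
    rcases eq_or_ne (M v) 0 with hMv | hMv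
    · rw [hMv]; simp; positivity
    · have hMvpos : 0 < ‖M v‖ := norm_pos_iff.mpr hMv
      have h1 : ⟪M v, M v⟫ ^ 2 ≤ ⟪M v, v⟫ * ⟪M (M v), M v⟫ := CS v (M v)
      have h6 : ⟪M v, M v⟫ = ‖M v‖ ^ 2 := real_inner_self_eq_norm_sq (M v)
      have hsq : ‖M v‖ ^ 2 * ‖M v‖ ^ 2 ≤ (L * ‖v‖) ^ 2 * ‖M v‖ ^ 2 := by
        nlinarith [hL v, hL (M v), h0 v, h0 (M v)]
      have hsq2 : ‖M v‖ ^ 2 ≤ (L * ‖v‖) ^ 2 := by nlinarith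
      nlinarith [mul_nonneg hLnn (norm_nonneg v)]

lemma euclid_norm_le_sqrt {q : ℕ} (v : EuclideanSpace ℝ (Fin q)) (c : ℝ) (hc : 0 ≤ c)
    (hv : ∀ j, |v j| ≤ c) : ‖v‖ ≤ Real.sqrt q * c := by
  rw [EuclideanSpace.norm_eq]
  have hb : ∑ j, ‖v j‖ ^ 2 ≤ (q : ℝ) * c ^ 2 := by
    calc ∑ j, ‖v j‖ ^ 2 ≤ ∑ _j : Fin q, c ^ 2 := by
          apply Finset.sum_le_sum
          intro j _
          have := hv j
          rw [Real.norm_eq_abs]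
          nlinarith [abs_nonneg (v j)]
      _ = (q : ℝ) * c ^ 2 := by simp [Finset.sum_const, Finset.card_univ]
  calc Real.sqrt (∑ j, ‖v j‖ ^ 2) ≤ Real.sqrt ((q : ℝ) * c ^ 2) := Real.sqrt_le_sqrt hb
    _ = Real.sqrt q * c := by
        rw [Real.sqrt_mul (Nat.cast_nonneg q), Real.sqrt_sq hc]

lemma taylor_fd {E : Type*} [NormedAddCommGroup E] [NormedSpace ℝ E]
    (f : E → ℝ) (hf : ContDiff ℝ 2 f) (u w : E) (h C : ℝ) (hh : 0 < h) (hC0 : 0 ≤ C)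
    (hbd : ∀ y : E, 0 ≤ fderiv ℝ (fderiv ℝ f) y w w ∧ fderiv ℝ (fderiv ℝ f) y w w ≤ C) :
    |f (u + h • w) - f u - h * (fderiv ℝ f u w)| ≤ C * h ^ 2 := by
  have hf1 : Differentiable ℝ f := hf.differentiable (by norm_num)
  have hf' : ContDiff ℝ 1 (fderiv ℝ f) := hf.fderiv_right (m := 1) (by norm_num)
  have hc : ∀ t : ℝ, HasDerivAt (fun s : ℝ => u + s • w) w t := by
    intro t
    simpa using ((hasDerivAt_id t).smul_const w).const_add u
  set φ' : ℝ → ℝ := fun t => fderiv ℝ f (u + t • w) w with hφ'def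
  have hφ : ∀ t : ℝ, HasDerivAt (fun s : ℝ => f (u + s • w)) (φ' t) t := by
    intro t
    exact (hf1 (u + t • w)).hasFDerivAt.comp_hasDerivAt t (hc t)
  have hφ' : ∀ t : ℝ, HasDerivAt φ' (fderiv ℝ (fderiv ℝ f) (u + t • w) w w) t := by
    intro t
    have h1 : HasDerivAt (fun s : ℝ => fderiv ℝ f (u + s • w))
        (fderiv ℝ (fderiv ℝ f) (u + t • w) w) t :=
      (hf'.differentiable (by norm_num) (u + t • w)).hasFDerivAt.comp_hasDerivAt t (hc t)
    have := h1.clm_apply (hasDerivAt_const t w)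
    simpa using this
  have hlip : ∀ t : ℝ, ‖φ' t - φ' 0‖ ≤ C * ‖t - (0:ℝ)‖ := by
    intro t
    refine convex_univ.norm_image_sub_le_of_norm_hasDerivWithin_le
      (fun s _ => (hφ' s).hasDerivWithinAt) (fun s _ => ?_) (Set.mem_univ 0) (Set.mem_univ t)
    rw [Real.norm_eq_abs, abs_le]
    exact ⟨by linarith [(hbd (u + s • w)).1], (hbd (u + s • w)).2⟩
  have hcontφ' : Continuous φ' := by
    have h1 : Continuous fun t : ℝ => fderiv ℝ f (u + t • w) :=
      (hf'.continuous).comp (by continuity)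
    exact h1.clm_apply continuous_const
  have hint : ∫ t in (0:ℝ)..h, (φ' t - φ' 0) =
      (f (u + h • w) - h * φ' 0) - (f (u + (0:ℝ) • w) - 0 * φ' 0) := by
    apply intervalIntegral.integral_eq_sub_of_hasDerivAt
    · intro t _
      exact (hφ t).sub ((hasDerivAt_mul_const (φ' 0)).congr_deriv rfl)
    · exact (hcontφ'.sub continuous_const).intervalIntegrable 0 h
  have hbound : ‖∫ t in (0:ℝ)..h, (φ' t - φ' 0)‖ ≤ C * h * |h - 0| := by
    apply intervalIntegral.norm_integral_le_of_norm_le_const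
    intro t ht
    rw [Set.uIoc_of_le hh.le] at ht
    calc ‖φ' t - φ' 0‖ ≤ C * ‖t - (0:ℝ)‖ := hlip t
      _ ≤ C * h := by
          rw [sub_zero, Real.norm_eq_abs, abs_of_pos ht.1]
          exact mul_le_mul_of_nonneg_left ht.2 hC0
  have hφ0 : φ' 0 = fderiv ℝ f u w := by simp [hφ'def]
  rw [hint] at hbound
  rw [Real.norm_eq_abs] at hbound
  simp only [zero_smul, add_zero, zero_mul, sub_zero] at hbound
  rw [hφ0] at hbound
  calc |f (u + h • w) - f u - h * fderiv ℝ f u w|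
      = |f (u + h • w) - h * fderiv ℝ f u w - f u| := by ring_nf
    _ ≤ C * h * |h| := hbound
    _ = C * h ^ 2 := by rw [abs_of_pos hh]; ring

set_option maxHeartbeats 4000000 in
theorem statement13 (d q : ℕ) (D : Set (Fin d → ℝ))
    (V Vt : (Fin d → ℝ) → EuclideanSpace ℝ (Fin q) → ℝ)
    (hV : ∀ x ∈ D, ContDiff ℝ 2 (V x))
    (lmin lmax : ℝ) (hl : 0 < lmin) (hle : lmin ≤ lmax)
    (hHess : ∀ x ∈ D, ∀ u v : EuclideanSpace ℝ (Fin q),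
      lmin * ‖v‖ ^ 2 ≤ iteratedFDeriv ℝ 2 (V x) u ![v, v] ∧
        iteratedFDeriv ℝ 2 (V x) u ![v, v] ≤ lmax * ‖v‖ ^ 2)
    (C₁ : ℝ) (hC₁ : 0 < C₁)
    (hdiag : ∀ x ∈ D, ∀ (u : EuclideanSpace ℝ (Fin q)) (j : Fin q),
      iteratedFDeriv ℝ 2 (V x) u
        ![EuclideanSpace.single j 1, EuclideanSpace.single j 1] ≤ C₁)
    (ustar : (Fin d → ℝ) → EuclideanSpace ℝ (Fin q))
    (hustar : ∀ x ∈ D, ∀ u, V x (ustar x) ≤ V x u)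
    (u₀ : EuclideanSpace ℝ (Fin q)) (γ : ℝ) (hγ : 0 < γ)
    (hu₀ : ∀ x ∈ D, ‖u₀ - ustar x‖ ≤ γ)
    (e₁ : ℝ) (he₁ : 0 < e₁)
    (hVt : ∀ x ∈ D, ∀ u, |V x u - Vt x u| ≤ e₁)
    (h : ℝ) (hh : 0 < h)
    (β L : ℝ) (hβ : β = 1 / max 1 (2 * lmax)) (hL : L = 1 - β * lmin)
    (ψt : (Fin d → ℝ) → EuclideanSpace ℝ (Fin q) → EuclideanSpace ℝ (Fin q))
    (hψt : ∀ x ∈ D, ∀ (u : EuclideanSpace ℝ (Fin q)) (j : Fin q),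
      ψt x u j = u j - β / h * (Vt x (u + h • EuclideanSpace.single j 1) - Vt x u)) :
    ∀ x ∈ D, ∀ K : ℕ, 1 ≤ K →
      ‖(ψt x)^[K] u₀ - ustar x‖ ≤
        γ * L ^ K + C₁ * Real.sqrt q * K * h + 2 * Real.sqrt q * K * h⁻¹ * e₁ := by
  intro x hx K hK
  -- basic constants
  have hm : (0:ℝ) < max 1 (2 * lmax) := lt_of_lt_of_le one_pos (le_max_left _ _)
  have hβpos : 0 < β := by rw [hβ]; positivity
  have hβ1 : β ≤ 1 := by
    rw [hβ, div_le_one hm]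
    exact le_max_left _ _
  have hβmax : β * lmax ≤ 1 / 2 := by
    rw [hβ, div_mul_eq_mul_div, one_mul, div_le_div_iff₀ hm (by norm_num : (0:ℝ) < 2)]
    have := le_max_right 1 (2 * lmax)
    linarith
  have hβmin : 0 < β * lmin := mul_pos hβpos hl
  have hLlb : 1/2 ≤ L := by
    rw [hL]
    have : β * lmin ≤ β * lmax := mul_le_mul_of_nonneg_left hle hβpos.le
    linarith
  have hL0 : 0 ≤ L := by linarith
  have hL1 : L ≤ 1 := by rw [hL]; linarith
  -- setup
  set f : EuclideanSpace ℝ (Fin q) → ℝ := V x with hfdef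
  have hf : ContDiff ℝ 2 f := hV x hx
  have hf1 : Differentiable ℝ f := hf.differentiable (by norm_num)
  have hfC1 : ContDiff ℝ 1 (fderiv ℝ f) := hf.fderiv_right (m := 1) (by norm_num)
  have hf'diff : Differentiable ℝ (fderiv ℝ f) := hfC1.differentiable (by norm_num)
  have hsym : ∀ u v w : EuclideanSpace ℝ (Fin q), fderiv ℝ (fderiv ℝ f) u v w = fderiv ℝ (fderiv ℝ f) u w v := fun u =>
    second_derivative_symmetric (fun y => (hf1 y).hasFDerivAt) (hf'diff u).hasFDerivAt
  have hit2 : ∀ (u v w : EuclideanSpace ℝ (Fin q)),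
      iteratedFDeriv ℝ 2 f u ![v, w] = fderiv ℝ (fderiv ℝ f) u v w := by
    intro u v w
    rw [iteratedFDeriv_two_apply]
    simp
  have hquad : ∀ u v : EuclideanSpace ℝ (Fin q),
      lmin * ‖v‖ ^ 2 ≤ fderiv ℝ (fderiv ℝ f) u v v ∧ fderiv ℝ (fderiv ℝ f) u v v ≤ lmax * ‖v‖ ^ 2 := by
    intro u v
    have := hHess x hx u v
    rwa [hit2 u v v] at this
  -- the exact gradient map
  set T : (EuclideanSpace ℝ (Fin q) →L[ℝ] ℝ) →L[ℝ] EuclideanSpace ℝ (Fin q) :=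
    (InnerProductSpace.toDual ℝ (EuclideanSpace ℝ (Fin q))).symm.toContinuousLinearEquiv.toContinuousLinearMap
    with hTdef
  have hTapply : ∀ (l : EuclideanSpace ℝ (Fin q) →L[ℝ] ℝ) (v : EuclideanSpace ℝ (Fin q)),
      ⟪T l, v⟫ = l v := by
    intro l v
    exact InnerProductSpace.toDual_symm_apply
  set F : EuclideanSpace ℝ (Fin q) → EuclideanSpace ℝ (Fin q) :=
    fun u => u - β • T (fderiv ℝ f u) with hFdef
  set M : EuclideanSpace ℝ (Fin q) →
      EuclideanSpace ℝ (Fin q) →L[ℝ] EuclideanSpace ℝ (Fin q) := fun u =>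
    ContinuousLinearMap.id ℝ (EuclideanSpace ℝ (Fin q)) - β • (T.comp (fderiv ℝ (fderiv ℝ f) u)) with hMdef
  have hF : ∀ u : EuclideanSpace ℝ (Fin q), HasFDerivAt F (M u) u := by
    intro u
    exact (hasFDerivAt_id u).sub ((T.hasFDerivAt.comp u (hf'diff u).hasFDerivAt).const_smul β)
  have hMform : ∀ u v w : EuclideanSpace ℝ (Fin q), ⟪M u v, w⟫ = ⟪v, w⟫ - β * fderiv ℝ (fderiv ℝ f) u v w := by
    intro u v w
    simp only [hMdef, ContinuousLinearMap.sub_apply, ContinuousLinearMap.id_apply,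
      ContinuousLinearMap.coe_smul', Pi.smul_apply, ContinuousLinearMap.comp_apply]
    rw [inner_sub_left, real_inner_smul_left, hTapply]
  have hMbound : ∀ (u v : EuclideanSpace ℝ (Fin q)), ‖M u v‖ ≤ L * ‖v‖ := by
    intro u
    apply sym_op_norm_le
    · intro v w
      rw [hMform, hMform, hsym u v w, real_inner_comm]
    · intro v
      rw [hMform]
      have h2 := real_inner_self_eq_norm_sq v
      nlinarith [sq_nonneg ‖v‖, mul_le_mul_of_nonneg_left (hquad u v).2 hβpos.le]
    · intro v
      rw [hMform]
      have h2 := real_inner_self_eq_norm_sq v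
      have := mul_le_mul_of_nonneg_left (hquad u v).1 hβpos.le
      rw [hL]
      nlinarith
  have hFlip : ∀ a b : EuclideanSpace ℝ (Fin q), ‖F b - F a‖ ≤ L * ‖b - a‖ := by
    intro a b
    exact convex_univ.norm_image_sub_le_of_norm_hasFDerivWithin_le
      (fun u _ => (hF u).hasFDerivWithinAt)
      (fun u _ => ContinuousLinearMap.opNorm_le_bound _ hL0 (hMbound u))
      (Set.mem_univ a) (Set.mem_univ b)
  have hFfix : F (ustar x) = ustar x := by
    have hmin : IsLocalMin f (ustar x) := Filter.Eventually.of_forall (hustar x hx)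
    have h0 : fderiv ℝ f (ustar x) = 0 := hmin.fderiv_eq_zero
    simp [hFdef, h0]
  -- per-step error
  set cstep : ℝ := β / h * (2 * e₁ + C₁ * h ^ 2) with hcstepdef
  have hcstep0 : 0 ≤ cstep := by positivity
  have hstep : ∀ u : EuclideanSpace ℝ (Fin q), ‖ψt x u - F u‖ ≤ Real.sqrt q * cstep := by
    intro u
    apply euclid_norm_le_sqrt _ _ hcstep0
    intro j
    set e : EuclideanSpace ℝ (Fin q) := EuclideanSpace.single j (1:ℝ) with hedef
    have hcoord : (ψt x u - F u) j =
        -(β / h) * ((Vt x (u + h • e) - V x (u + h • e)) + (V x u - Vt x u) +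
          (V x (u + h • e) - V x u - h * fderiv ℝ f u e)) := by
      rw [PiLp.sub_apply, hψt x hx u j]
      have hFj : F u j = u j - β * fderiv ℝ f u e := by
        rw [hFdef]
        simp only [PiLp.sub_apply, PiLp.smul_apply, smul_eq_mul]
        congr 1
        congr 1
        have h1 : T (fderiv ℝ f u) j = ⟪T (fderiv ℝ f u), e⟫ := by
          rw [hedef, EuclideanSpace.inner_single_right]
          simp
        rw [h1, hTapply]
      rw [hFj]
      field_simp
      ring
    rw [hcoord]
    have htay : |V x (u + h • e) - V x u - h * fderiv ℝ f u e| ≤ C₁ * h ^ 2 := by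
      have := taylor_fd f hf u e h C₁ hh hC₁.le ?_
      · rw [hfdef] at this; exact this
      intro y
      constructor
      · have h1 := (hquad y e).1
        nlinarith [sq_nonneg ‖e‖, mul_nonneg hl.le (sq_nonneg ‖e‖)]
      · have h1 := hdiag x hx y j
        rw [← hfdef, hit2 y e e] at h1
        exact h1
    have h1 := hVt x hx (u + h • e)
    have h2 := hVt x hx u
    rw [abs_mul, abs_neg, abs_div, abs_of_pos hβpos, abs_of_pos hh, hcstepdef]
    have habs : |(Vt x (u + h • e) - V x (u + h • e)) + (V x u - Vt x u) +
        (V x (u + h • e) - V x u - h * fderiv ℝ f u e)| ≤ 2 * e₁ + C₁ * h ^ 2 := by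
      calc |(Vt x (u + h • e) - V x (u + h • e)) + (V x u - Vt x u) +
          (V x (u + h • e) - V x u - h * fderiv ℝ f u e)|
          ≤ |Vt x (u + h • e) - V x (u + h • e)| + |V x u - Vt x u| +
            |V x (u + h • e) - V x u - h * fderiv ℝ f u e| :=
            (abs_add_le _ _).trans (by gcongr; exact abs_add_le _ _)
        _ ≤ e₁ + e₁ + C₁ * h ^ 2 := by
            refine add_le_add (add_le_add ?_ h2) htay
            rw [abs_sub_comm]; exact h1
        _ = 2 * e₁ + C₁ * h ^ 2 := by ring
    exact mul_le_mul_of_nonneg_left habs (by positivity)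
  -- step constant vs final constant
  set cfin : ℝ := C₁ * Real.sqrt q * h + 2 * Real.sqrt q * h⁻¹ * e₁ with hcfindef
  have hsq0 : (0:ℝ) ≤ Real.sqrt q := Real.sqrt_nonneg _
  have hcfin0 : 0 ≤ cfin := by rw [hcfindef]; positivity
  have hstepfin : Real.sqrt q * cstep ≤ cfin := by
    rw [hcstepdef, hcfindef]
    have expand : Real.sqrt q * (β / h * (2 * e₁ + C₁ * h ^ 2)) =
        β * (2 * Real.sqrt q * h⁻¹ * e₁) + β * (C₁ * Real.sqrt q * h) := by
      field_simp
    rw [expand]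
    have t1 : β * (2 * Real.sqrt q * h⁻¹ * e₁) ≤ 2 * Real.sqrt q * h⁻¹ * e₁ := by
      nlinarith [mul_nonneg (mul_nonneg (mul_nonneg (by norm_num : (0:ℝ) ≤ 2) hsq0)
        (inv_pos.mpr hh).le) he₁.le]
    have t2 : β * (C₁ * Real.sqrt q * h) ≤ C₁ * Real.sqrt q * h := by
      nlinarith [mul_nonneg (mul_nonneg hC₁.le hsq0) hh.le]
    linarith
  -- induction
  have main : ∀ N : ℕ, ‖(ψt x)^[N] u₀ - ustar x‖ ≤ γ * L ^ N + N * cfin := by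
    intro N
    induction N with
    | zero => simpa using hu₀ x hx
    | succ n ih =>
        rw [Function.iterate_succ_apply']
        calc ‖ψt x ((ψt x)^[n] u₀) - ustar x‖
            = ‖(ψt x ((ψt x)^[n] u₀) - F ((ψt x)^[n] u₀)) +
              (F ((ψt x)^[n] u₀) - ustar x)‖ := by rw [sub_add_sub_cancel]
          _ ≤ ‖ψt x ((ψt x)^[n] u₀) - F ((ψt x)^[n] u₀)‖ +
              ‖F ((ψt x)^[n] u₀) - ustar x‖ := norm_add_le _ _
          _ = ‖ψt x ((ψt x)^[n] u₀) - F ((ψt x)^[n] u₀)‖ +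
              ‖F ((ψt x)^[n] u₀) - F (ustar x)‖ := by rw [hFfix]
          _ ≤ Real.sqrt q * cstep + L * ‖(ψt x)^[n] u₀ - ustar x‖ :=
              add_le_add (hstep _) (hFlip (ustar x) _)
          _ ≤ cfin + L * (γ * L ^ n + n * cfin) :=
              add_le_add hstepfin (mul_le_mul_of_nonneg_left ih hL0)
          _ ≤ γ * L ^ (n + 1) + (n + 1 : ℕ) * cfin := by
              have hkey : L * ((n:ℝ) * cfin) ≤ (n:ℝ) * cfin := by
                nlinarith [mul_nonneg (Nat.cast_nonneg n : (0:ℝ) ≤ (n:ℝ)) hcfin0]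
              have expand2 : cfin + L * (γ * L ^ n + (n:ℝ) * cfin) =
                  γ * L ^ (n + 1) + cfin + L * ((n:ℝ) * cfin) := by ring
              push_cast
              rw [expand2]
              linarith [hkey]
  calc ‖(ψt x)^[K] u₀ - ustar x‖ ≤ γ * L ^ K + K * cfin := main K
    _ = γ * L ^ K + C₁ * Real.sqrt q * K * h + 2 * Real.sqrt q * K * h⁻¹ * e₁ := by
        rw [hcfindef]; ring
end
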